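/- Let X and Y be Hilbert spaces, T : X → Y a bounded linear operator with dim N(T) < ∞, with a least-squares projection approximation {(X_n, T_n)} that has kernel approximability. Set g_n := gap(P_{N(T)^⊥}(X_n), T*T(X_n)). Then there exists n* ∈ ℕ such that for every n ≥ n* the following are equivalent: (i) g_n = 0; (ii) T_n† y = P_{X_n} T† y for all y ∈ D(T†); (iii) N(T) + T*T(X_n) ⊆ X_n. -/

import Mathlib

open Filter Topology Metric Submodule ContinuousLinearMap

/-- Orthogonal projection onto a subspace `K` (as an operator `H →L[ℝ] H`),
defined whenever `K` admits orthogonal projections (e.g. `K` closed). -/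
noncomputable def orthProj {H : Type*} [NormedAddCommGroup H] [InnerProductSpace ℝ H]
    (K : Submodule ℝ H) : H →L[ℝ] H :=
  open scoped Classical in
  if h : HasOrthogonalProjection K then
    haveI := h
    K.subtypeL.comp (orthogonalProjection K)
  else 0

/-- `δ(M,N) = sup {dist(x,N) : x ∈ M, ‖x‖ = 1}` (0 if `M = {0}`, as `sSup ∅ = 0` in `ℝ`). -/
noncomputable def deltaSub {H : Type*} [NormedAddCommGroup H] [InnerProductSpace ℝ H]
    (M N : Submodule ℝ H) : ℝ :=
  sSup {d : ℝ | ∃ x ∈ M, ‖x‖ = 1 ∧ d = Metric.infDist x (N : Set H)}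

/-- The gap between two subspaces. -/
noncomputable def gapSub {H : Type*} [NormedAddCommGroup H] [InnerProductSpace ℝ H]
    (M N : Submodule ℝ H) : ℝ :=
  max (deltaSub M N) (deltaSub N M)

section helpers
variable {H : Type*} [NormedAddCommGroup H] [InnerProductSpace ℝ H]

lemma orthProj_apply (K : Submodule ℝ H) [h : HasOrthogonalProjection K] (x : H) :
    orthProj K x = (orthogonalProjection K x : H) := by
  unfold orthProj; rw [dif_pos h]; rfl

lemma orthProj_mem (K : Submodule ℝ H) [HasOrthogonalProjection K] (x : H) :
    orthProj K x ∈ K := by rw [orthProj_apply]; exact (orthogonalProjection K x).2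

lemma orthProj_eq_self (K : Submodule ℝ H) [HasOrthogonalProjection K] {x : H} (hx : x ∈ K) :
    orthProj K x = x := by
  rw [orthProj_apply]
  exact K.starProjection_eq_self_iff.2 hx

lemma orthProj_eq_zero (K : Submodule ℝ H) [HasOrthogonalProjection K] {x : H} (hx : x ∈ Kᗮ) :
    orthProj K x = 0 := by
  rw [orthProj_apply,
    orthogonalProjection_mem_subspace_orthogonalComplement_eq_zero hx]
  rfl

lemma sub_orthProj_mem (K : Submodule ℝ H) [HasOrthogonalProjection K] (x : H) :
    x - orthProj K x ∈ Kᗮ := by rw [orthProj_apply]; exact K.sub_starProjection_mem_orthogonal x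

lemma inner_orthProj (K : Submodule ℝ H) [HasOrthogonalProjection K] (u v : H) :
    (inner ℝ (orthProj K u) v : ℝ) = inner ℝ u (orthProj K v) := by
  rw [orthProj_apply, orthProj_apply]
  exact inner_starProjection_left_eq_right K u v

lemma orthProj_eq_of (K : Submodule ℝ H) [HasOrthogonalProjection K] {y z : H}
    (hz : z ∈ K) (hyz : y - z ∈ Kᗮ) : orthProj K y = z := by
  have h1 := orthProj_mem K y
  have h2 := sub_orthProj_mem K y
  have hd : orthProj K y - z ∈ K ⊓ Kᗮ := by
    constructor
    · exact K.sub_mem h1 hz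
    · have : y - z - (y - orthProj K y) = orthProj K y - z := by abel
      exact this ▸ Kᗮ.sub_mem hyz h2
  rw [Submodule.inf_orthogonal_eq_bot K] at hd
  simpa [sub_eq_zero] using hd

end helpers
section gap
variable {H : Type*} [NormedAddCommGroup H] [InnerProductSpace ℝ H]

lemma deltaSub_nonneg (M N : Submodule ℝ H) : 0 ≤ deltaSub M N :=
  Real.sSup_nonneg (by rintro d ⟨x, hx, hn, rfl⟩; exact infDist_nonneg)

lemma deltaSub_eq_zero_of_le {M N : Submodule ℝ H} (h : M ≤ N) : deltaSub M N = 0 := by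
  refine le_antisymm (Real.sSup_le ?_ le_rfl) (deltaSub_nonneg M N)
  rintro d ⟨x, hx, hn, rfl⟩
  exact le_of_eq (infDist_zero_of_mem (h hx))

lemma le_of_deltaSub_eq_zero {M N : Submodule ℝ H} (hN : IsClosed (N : Set H))
    (h : deltaSub M N = 0) : M ≤ N := by
  intro x hx
  rcases eq_or_ne x 0 with rfl | hx0
  · exact N.zero_mem
  · set u := ‖x‖⁻¹ • x with hu
    have hun : ‖u‖ = 1 := by
      rw [hu, norm_smul, norm_inv, norm_norm, inv_mul_cancel₀ (norm_ne_zero_iff.2 hx0)]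
    have huM : u ∈ M := M.smul_mem _ hx
    have hbdd : BddAbove {d : ℝ | ∃ x ∈ M, ‖x‖ = 1 ∧ d = Metric.infDist x (N : Set H)} := by
      refine ⟨1, ?_⟩
      rintro d ⟨z, hz, hzn, rfl⟩
      calc Metric.infDist z (N : Set H) ≤ dist z 0 := infDist_le_dist_of_mem N.zero_mem
        _ = 1 := by simp [hzn]
    have hle : Metric.infDist u (N : Set H) ≤ 0 := by
      rw [← h]
      exact le_csSup hbdd ⟨u, huM, hun, rfl⟩
    have h0 : Metric.infDist u (N : Set H) = 0 := le_antisymm hle infDist_nonneg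
    have huN : u ∈ N := by
      have : u ∈ closure (N : Set H) :=
        (mem_closure_iff_infDist_zero ⟨0, N.zero_mem⟩).2 h0
      rwa [hN.closure_eq] at this
    have : ‖x‖ • u = x := by
      rw [hu, smul_smul, mul_inv_cancel₀ (norm_ne_zero_iff.2 hx0), one_smul]
    rw [← this]; exact N.smul_mem _ huN

lemma gapSub_eq_zero_iff {M N : Submodule ℝ H} (hM : IsClosed (M : Set H))
    (hN : IsClosed (N : Set H)) : gapSub M N = 0 ↔ M = N := by
  constructor
  · intro h
    have h1 : deltaSub M N = 0 :=
      le_antisymm (le_trans (le_max_left _ _) h.le) (deltaSub_nonneg _ _)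
    have h2 : deltaSub N M = 0 :=
      le_antisymm (le_trans (le_max_right _ _) h.le) (deltaSub_nonneg _ _)
    exact le_antisymm (le_of_deltaSub_eq_zero hN h1) (le_of_deltaSub_eq_zero hM h2)
  · rintro rfl
    simp [gapSub, deltaSub_eq_zero_of_le le_rfl]
end gap
section ker
variable {X : Type*} [NormedAddCommGroup X] [InnerProductSpace ℝ X] [CompleteSpace X]

lemma eventually_ker_le (N : Submodule ℝ X) [FiniteDimensional ℝ N]
    (Xn : ℕ → Submodule ℝ X)
    (hKA : ∀ x ∈ N, Filter.Tendsto
      (fun n => Metric.infDist x ((N ⊓ Xn n : Submodule ℝ X) : Set X)) Filter.atTop (𝓝 0)) :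
    ∀ᶠ n in Filter.atTop, N ≤ Xn n := by
  classical
  set k := Module.finrank ℝ N with hk
  set e : OrthonormalBasis (Fin k) ℝ N := stdOrthonormalBasis ℝ N
  set ε : ℝ := (k + 1 : ℝ)⁻¹ with hε
  have hεpos : 0 < ε := by positivity
  have hev : ∀ᶠ n in Filter.atTop, ∀ i : Fin k,
      Metric.infDist (e i : X) ((N ⊓ Xn n : Submodule ℝ X) : Set X) < ε := by
    rw [Filter.eventually_all]
    intro i
    have := hKA (e i : X) (e i).2
    exact this.eventually_lt_const hεpos
  filter_upwards [hev] with n hn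
  -- show N ≤ Xn n
  by_contra hle
  rw [SetLike.le_def] at hle
  push_neg at hle
  obtain ⟨x0, hx0N, hx0X⟩ := hle
  clear hKA hev
  set M : Submodule ℝ X := N ⊓ Xn n with hM
  haveI : FiniteDimensional ℝ M := Submodule.finiteDimensional_of_le (inf_le_left (b := Xn n))
  -- find v ∈ N, ‖v‖ = 1, v ⊥ M
  have hMN : M ≤ N := inf_le_left
  have hne : ∃ v0 : X, v0 ∈ Mᗮ ⊓ N ∧ v0 ≠ 0 := by
    by_contra hcon
    push_neg at hcon
    apply hx0X
    suffices h : ∀ x ∈ N, x ∈ M by exact (Submodule.mem_inf.1 (h x0 hx0N)).2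
    intro x hx
    have hsub : x - orthProj M x ∈ Mᗮ ⊓ N := by
      refine ⟨sub_orthProj_mem M x, N.sub_mem hx (hMN (orthProj_mem M x))⟩
    by_cases h0 : x - orthProj M x = 0
    · rw [sub_eq_zero] at h0; rw [h0]; exact orthProj_mem M x
    · exact absurd (hcon _ hsub) (by simpa using h0)
  obtain ⟨v0, ⟨hv0M, hv0N⟩, hv00⟩ := hne
  set v : X := ‖v0‖⁻¹ • v0 with hv
  have hvn : ‖v‖ = 1 := by
    rw [hv, norm_smul, norm_inv, norm_norm, inv_mul_cancel₀ (norm_ne_zero_iff.2 hv00)]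
  have hvN : v ∈ N := N.smul_mem _ hv0N
  have hvM : v ∈ Mᗮ := Mᗮ.smul_mem _ hv0M
  -- lower bound
  have hlow : (1 : ℝ) ≤ Metric.infDist v (M : Set X) := by
    by_contra hcon
    push_neg at hcon
    obtain ⟨m, hm, hdm⟩ := (Metric.infDist_lt_iff ⟨0, M.zero_mem⟩).1 hcon
    refine absurd hdm (not_lt.2 ?_)
    have horth : (inner ℝ m v : ℝ) = 0 := hvM m hm
    have horth' : (inner ℝ v m : ℝ) = 0 := by rwa [real_inner_comm]
    have : dist v m ^ 2 = ‖v‖ ^ 2 + ‖m‖ ^ 2 := by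
      rw [dist_eq_norm, ← real_inner_self_eq_norm_sq, ← real_inner_self_eq_norm_sq,
        ← real_inner_self_eq_norm_sq, inner_sub_sub_self, horth, horth']
      ring
    nlinarith [norm_nonneg m, dist_nonneg (x := v) (y := m), hvn]
  -- upper bound
  have hup : Metric.infDist v (M : Set X) < 1 := by
    -- choose m i close to e i
    have hch : ∀ i : Fin k, ∃ m ∈ M, dist (e i : X) m < ε := by
      intro i
      exact (Metric.infDist_lt_iff ⟨0, M.zero_mem⟩).1 (hn i)
    choose m hmM hmd using hch
    set c : Fin k → ℝ := fun i => inner ℝ ((e i : X)) v with hc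
    have hcb : ∀ i, |c i| ≤ 1 := by
      intro i
      calc |c i| ≤ ‖(e i : X)‖ * ‖v‖ := abs_real_inner_le_norm _ _
        _ = 1 := by rw [hvn, show ‖(e i : X)‖ = 1 from (e.orthonormal.1 i), mul_one]
    have hvsum : v = ∑ i, c i • (e i : X) := by
      have h1 := e.sum_repr' (⟨v, hvN⟩ : N)
      have h2 := congrArg (Subtype.val) h1
      push_cast at h2
      rw [← h2]
      refine (Finset.sum_congr rfl fun i _ => ?_).symm
      congr 1
    set w : X := ∑ i, c i • m i with hw
    have hwM : w ∈ M := M.sum_mem (fun i _ => M.smul_mem _ (hmM i))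
    have hd : dist v w < 1 := by
      have : v - w = ∑ i, c i • ((e i : X) - m i) := by
        rw [hvsum, hw, ← Finset.sum_sub_distrib]
        congr 1; ext i; rw [smul_sub]
      rw [dist_eq_norm, this]
      calc ‖∑ i, c i • ((e i : X) - m i)‖ ≤ ∑ i, ‖c i • ((e i : X) - m i)‖ :=
            norm_sum_le _ _
        _ ≤ ∑ i : Fin k, ε := by
            refine Finset.sum_le_sum (fun i _ => ?_)
            rw [norm_smul]
            calc ‖c i‖ * ‖(e i : X) - m i‖ ≤ 1 * ε := by
                  refine mul_le_mul (by simpa using hcb i) ?_ (norm_nonneg _) zero_le_one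
                  rw [← dist_eq_norm]; exact (hmd i).le
              _ = ε := one_mul ε
        _ = k * ε := by simp [mul_comm]
        _ < 1 := by
            rw [hε]
            rw [mul_inv_lt_iff₀ (by positivity)]
            push_cast; linarith
    exact lt_of_le_of_lt (infDist_le_dist_of_mem hwM) hd
  linarith
end ker

variable {X Y : Type*} [NormedAddCommGroup X] [InnerProductSpace ℝ X] [CompleteSpace X]
  [NormedAddCommGroup Y] [InnerProductSpace ℝ Y] [CompleteSpace Y]

/-- Characterization of zero offset angle, for large `n`. -/
theorem stmt4
    (T : X →L[ℝ] Y) (Xn : ℕ → Submodule ℝ X)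
    (hfin : ∀ n, FiniteDimensional ℝ (Xn n))
    (hinf : ¬ FiniteDimensional ℝ X)
    (hproj : ∀ x : X, Tendsto (fun n => orthProj (Xn n) x) atTop (𝓝 x))
    (Tn : ℕ → X →L[ℝ] Y) (hTn : ∀ n, Tn n = T.comp (orthProj (Xn n)))
    (Tdag : Y → X)
    (hTdag : ∀ y ∈ (LinearMap.range (T : X →ₗ[ℝ] Y) ⊔ (LinearMap.range (T : X →ₗ[ℝ] Y))ᗮ : Submodule ℝ Y),
      Tdag y ∈ (LinearMap.ker (T : X →ₗ[ℝ] Y))ᗮ ∧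
        T (Tdag y) = orthProj (LinearMap.range (T : X →ₗ[ℝ] Y)).topologicalClosure y)
    (Tdagn : ℕ → Y → X)
    (hTdagn : ∀ n (y : Y), Tdagn n y ∈ (LinearMap.ker (Tn n : X →ₗ[ℝ] Y))ᗮ ∧
      (Tn n) (Tdagn n y) = orthProj ((Xn n).map (T : X →ₗ[ℝ] Y)) y)
    (hker : FiniteDimensional ℝ (LinearMap.ker (T : X →ₗ[ℝ] Y)))
    (hKA : (∀ x : X, x ∈ LinearMap.ker (T : X →ₗ[ℝ] Y) ↔
      Tendsto (fun n => Metric.infDist x ((LinearMap.ker (T : X →ₗ[ℝ] Y) ⊓ Xn n : Submodule ℝ X) : Set X))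
        atTop (𝓝 0))) :
    ∃ nStar : ℕ, ∀ n ≥ nStar,
      ((gapSub ((Xn n).map (orthProj ((LinearMap.ker (T : X →ₗ[ℝ] Y))ᗮ)).toLinearMap) ((Xn n).map ((ContinuousLinearMap.adjoint T).comp T).toLinearMap) = 0)
        ↔ (∀ y ∈ (LinearMap.range (T : X →ₗ[ℝ] Y) ⊔ (LinearMap.range (T : X →ₗ[ℝ] Y))ᗮ : Submodule ℝ Y),
            Tdagn n y = orthProj (Xn n) (Tdag y))) ∧
      ((gapSub ((Xn n).map (orthProj ((LinearMap.ker (T : X →ₗ[ℝ] Y))ᗮ)).toLinearMap) ((Xn n).map ((ContinuousLinearMap.adjoint T).comp T).toLinearMap) = 0)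
        ↔ (LinearMap.ker (T : X →ₗ[ℝ] Y) ⊔ (Xn n).map ((ContinuousLinearMap.adjoint T).comp T).toLinearMap ≤ Xn n)) := by
  classical
  set N : Submodule ℝ X := LinearMap.ker (T : X →ₗ[ℝ] Y) with hNdef
  haveI : FiniteDimensional ℝ N := hker
  obtain ⟨nStar, hstar⟩ :=
    eventually_atTop.1 (eventually_ker_le N Xn (fun x hx => (hKA x).1 hx))
  refine ⟨nStar, fun n hn => ?_⟩
  have hN : N ≤ Xn n := hstar n hn
  haveI := hfin n
  set A : X →L[ℝ] X := (ContinuousLinearMap.adjoint T).comp T with hA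
  set Q : X →L[ℝ] X := orthProj (Xn n) with hQ
  -- basic facts about A
  have hAapp : ∀ x : X, A x = ContinuousLinearMap.adjoint T (T x) := fun x => rfl
  have hAN : ∀ x : X, A x ∈ Nᗮ := by
    intro x
    rw [Submodule.mem_orthogonal]
    intro k hk
    rw [hAapp, ContinuousLinearMap.adjoint_inner_right]
    have : T k = 0 := hk
    rw [this, inner_zero_left]
  have hkerA : ∀ x : X, A x = 0 → x ∈ N := by
    intro x hx
    have h1 : (inner ℝ (T x) (T x) : ℝ) = 0 := by
      rw [← ContinuousLinearMap.adjoint_inner_right, ← hAapp, hx, inner_zero_right]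
    have : T x = 0 := by rwa [inner_self_eq_zero] at h1
    exact this
  -- the projected space equals Xn ⊓ Nᗮ
  haveI : FiniteDimensional ℝ ((Xn n).map A.toLinearMap) := Module.Finite.map _ _
  haveI : FiniteDimensional ℝ ((Xn n).map (orthProj Nᗮ).toLinearMap) := Module.Finite.map _ _
  have hMV : (Xn n).map (orthProj Nᗮ).toLinearMap = Xn n ⊓ Nᗮ := by
    apply le_antisymm
    · rintro _ ⟨x, hx, rfl⟩
      refine ⟨?_, orthProj_mem _ _⟩
      have hsub : x - orthProj Nᗮ x ∈ N := by
        have := sub_orthProj_mem Nᗮ x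
        rwa [Submodule.orthogonal_orthogonal N] at this
      have : orthProj Nᗮ x = x - (x - orthProj Nᗮ x) := by abel
      rw [ContinuousLinearMap.coe_coe, this]
      exact (Xn n).sub_mem hx (hN hsub)
    · rintro v ⟨hv1, hv2⟩
      exact ⟨v, hv1, orthProj_eq_self Nᗮ hv2⟩
  -- (iii) restricted : A(Xn) ≤ Xn ↔ A(Xn) = Xn ⊓ Nᗮ
  have hAV : (Xn n).map A.toLinearMap ≤ Xn n → (Xn n).map A.toLinearMap = Xn n ⊓ Nᗮ := by
    intro h3
    have hle : (Xn n).map A.toLinearMap ≤ Xn n ⊓ Nᗮ := by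
      rintro _ ⟨x, hx, rfl⟩
      exact ⟨h3 (Submodule.mem_map_of_mem hx), hAN x⟩
    refine le_antisymm hle ?_
    set V : Submodule ℝ X := Xn n ⊓ Nᗮ with hV
    haveI : FiniteDimensional ℝ V := Submodule.finiteDimensional_of_le inf_le_left
    have hAVV : ∀ x ∈ V, A.toLinearMap x ∈ V := by
      intro x hx
      exact ⟨h3 (Submodule.mem_map_of_mem hx.1), hAN x⟩
    set f : V →ₗ[ℝ] V := A.toLinearMap.restrict hAVV with hf
    have finj : Function.Injective f := by
      rw [← LinearMap.ker_eq_bot, LinearMap.ker_eq_bot']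
      intro z hz
      have hz' : A z.1 = 0 := by
        have := congrArg Subtype.val hz
        simpa [hf, LinearMap.restrict_apply] using this
      have hzN : (z : X) ∈ N := hkerA _ hz'
      have : (z : X) = 0 := by
        have h0 : (inner ℝ (z : X) (z : X) : ℝ) = 0 := z.2.2 (z : X) hzN
        rwa [inner_self_eq_zero] at h0
      exact Subtype.ext this
    have fsurj : Function.Surjective f := LinearMap.injective_iff_surjective.1 finj
    intro v hv
    obtain ⟨u, hu⟩ := fsurj ⟨v, hv⟩
    have hu' : A u.1 = v := by
      have := congrArg Subtype.val hu
      simpa [hf, LinearMap.restrict_apply] using this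
    exact ⟨u.1, u.2.1, hu'⟩
  -- closedness
  have hclM : IsClosed (((Xn n).map (orthProj Nᗮ).toLinearMap) : Set X) :=
    Submodule.closed_of_finiteDimensional _
  have hclA : IsClosed (((Xn n).map A.toLinearMap) : Set X) :=
    Submodule.closed_of_finiteDimensional _
  -- equivalence (i) ↔ (iii)
  have hiii : (gapSub ((Xn n).map (orthProj Nᗮ).toLinearMap) ((Xn n).map A.toLinearMap) = 0)
      ↔ (N ⊔ (Xn n).map A.toLinearMap ≤ Xn n) := by
    rw [gapSub_eq_zero_iff hclM hclA, hMV, sup_le_iff]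
    constructor
    · intro h
      exact ⟨hN, by rw [← h]; exact inf_le_left⟩
    · intro h
      exact (hAV h.2).symm
  -- equivalence (iii) → (ii)
  have h32 : (N ⊔ (Xn n).map A.toLinearMap ≤ Xn n) →
      (∀ y ∈ (LinearMap.range (T : X →ₗ[ℝ] Y) ⊔ (LinearMap.range (T : X →ₗ[ℝ] Y))ᗮ : Submodule ℝ Y),
        Tdagn n y = orthProj (Xn n) (Tdag y)) := by
    intro h3' y hy
    have h3 : (Xn n).map A.toLinearMap ≤ Xn n := le_trans le_sup_right h3'
    obtain ⟨hx1, hx2⟩ := hTdag y hy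
    obtain ⟨hd1, hd2⟩ := hTdagn n y
    set xd : X := Tdag y with hxd
    set v : X := Q xd with hv
    haveI : FiniteDimensional ℝ ((Xn n).map (T : X →ₗ[ℝ] Y)) := Module.Finite.map _ _
    -- v ∈ (ker Tn)ᗮ
    have hvorth : v ∈ (LinearMap.ker (Tn n : X →ₗ[ℝ] Y))ᗮ := by
      rw [Submodule.mem_orthogonal]
      intro w hw
      have hQw : Q w ∈ N := by
        have : T (Q w) = 0 := by
          have := LinearMap.mem_ker.1 hw
          rwa [hTn n] at this
        exact this
      calc (inner ℝ w v : ℝ) = inner ℝ (Q w) xd := by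
            rw [hv, real_inner_comm, inner_orthProj, real_inner_comm]
        _ = 0 := hx1 (Q w) hQw
    -- Tn v = orthProj (map T Xn) y
    have hTnv : Tn n v = orthProj ((Xn n).map (T : X →ₗ[ℝ] Y)) y := by
      refine (orthProj_eq_of _ ?_ ?_).symm
      · rw [hTn n]
        exact Submodule.mem_map_of_mem (orthProj_mem _ _)
      · rw [Submodule.mem_orthogonal]
        rintro _ ⟨x, hx, rfl⟩
        have hTnv' : Tn n v = T (Q xd) := by
          rw [hTn n, hv, ContinuousLinearMap.comp_apply]
          congr 1
          exact orthProj_eq_self _ (orthProj_mem _ _)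
        rw [hTnv']
        have hsplit : y - T (Q xd) = (y - T xd) + T (xd - Q xd) := by
          rw [map_sub]; abel
        rw [hsplit, inner_add_right]
        have e1 : (inner ℝ (T x) (y - T xd) : ℝ) = 0 := by
          rw [hx2]
          have hmem := sub_orthProj_mem (LinearMap.range (T : X →ₗ[ℝ] Y)).topologicalClosure y
          exact hmem (T x) ((LinearMap.range (T : X →ₗ[ℝ] Y)).le_topologicalClosure ⟨x, rfl⟩)
        have e2 : (inner ℝ (T x) (T (xd - Q xd)) : ℝ) = 0 := by
          rw [← ContinuousLinearMap.adjoint_inner_left, ← hAapp]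
          have hmem := sub_orthProj_mem (Xn n) xd
          exact (Submodule.mem_orthogonal _ _ |>.1 hmem) (A x)
            (h3 (Submodule.mem_map_of_mem hx))
        rw [ContinuousLinearMap.coe_coe, e1, e2, add_zero]
    -- uniqueness
    have hdiff : Tdagn n y - v = 0 := by
      have hk : Tdagn n y - v ∈ LinearMap.ker (Tn n : X →ₗ[ℝ] Y) := by
        rw [LinearMap.mem_ker, ContinuousLinearMap.coe_coe, map_sub, hd2, hTnv, sub_self]
      have ho : Tdagn n y - v ∈ (LinearMap.ker (Tn n : X →ₗ[ℝ] Y))ᗮ :=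
        Submodule.sub_mem _ hd1 hvorth
      have h0' : (inner ℝ (Tdagn n y - v) (Tdagn n y - v) : ℝ) = 0 :=
        (Submodule.mem_orthogonal _ _).1 ho _ hk
      rwa [inner_self_eq_zero] at h0'
    rw [← sub_eq_zero]
    exact hdiff
  -- equivalence (ii) → (iii)
  have h23 : (∀ y ∈ (LinearMap.range (T : X →ₗ[ℝ] Y) ⊔ (LinearMap.range (T : X →ₗ[ℝ] Y))ᗮ : Submodule ℝ Y),
        Tdagn n y = orthProj (Xn n) (Tdag y)) →
      (N ⊔ (Xn n).map A.toLinearMap ≤ Xn n) := by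
    intro h2
    refine sup_le hN ?_
    rintro _ ⟨x, hx, rfl⟩
    haveI : FiniteDimensional ℝ ((Xn n).map (T : X →ₗ[ℝ] Y)) := Module.Finite.map _ _
    -- show A x ∈ Xn n via double orthogonal complement
    rw [← Submodule.orthogonal_orthogonal (Xn n)]
    rw [Submodule.mem_orthogonal]
    intro w hw
    have hy : T w ∈ (LinearMap.range (T : X →ₗ[ℝ] Y) ⊔ (LinearMap.range (T : X →ₗ[ℝ] Y))ᗮ : Submodule ℝ Y) :=
      le_sup_left (a := LinearMap.range (T : X →ₗ[ℝ] Y)) ⟨w, rfl⟩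
    obtain ⟨hu1, hu2⟩ := hTdag (T w) hy
    set u : X := Tdag (T w) with hu
    have hu2' : T u = T w := by
      rw [hu2]
      exact orthProj_eq_self _ ((LinearMap.range (T : X →ₗ[ℝ] Y)).le_topologicalClosure ⟨w, rfl⟩)
    set k : X := u - w with hk
    have hkN : k ∈ N := by
      have : T k = 0 := by rw [hk, map_sub, hu2', sub_self]
      exact this
    have hQu : Q u = k := by
      have : u = w + k := by rw [hk]; abel
      rw [this, map_add]
      have hqw : Q w = 0 := orthProj_eq_zero _ hw
      have hqk : Q k = k := orthProj_eq_self _ (hN hkN)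
      rw [hqw, hqk, zero_add]
    have hTprojzero : orthProj ((Xn n).map (T : X →ₗ[ℝ] Y)) (T w) = 0 := by
      have h2' := h2 (T w) hy
      have hd2 := (hTdagn n (T w)).2
      rw [h2', ← hu] at hd2
      rw [← hd2, hTn n, ContinuousLinearMap.comp_apply, ← hQ, hQu]
      have : Q k = k := orthProj_eq_self _ (hN hkN)
      rw [this]
      exact hkN
    -- conclude
    have : (inner ℝ w (A x) : ℝ) = inner ℝ (T w) (T x) := by
      rw [hAapp, ContinuousLinearMap.adjoint_inner_right]
    rw [ContinuousLinearMap.coe_coe, this]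
    have hsplit : (inner ℝ (T w) (T x) : ℝ)
        = inner ℝ (orthProj ((Xn n).map (T : X →ₗ[ℝ] Y)) (T w)) (T x)
          + inner ℝ (T w - orthProj ((Xn n).map (T : X →ₗ[ℝ] Y)) (T w)) (T x) := by
      rw [← inner_add_left]
      congr 1
      abel
    rw [hsplit]
    have e2 : (inner ℝ (T w - orthProj ((Xn n).map (T : X →ₗ[ℝ] Y)) (T w)) (T x) : ℝ) = 0 := by
      rw [real_inner_comm]
      exact (sub_orthProj_mem ((Xn n).map (T : X →ₗ[ℝ] Y)) (T w)) (T x) (Submodule.mem_map_of_mem hx)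
    rw [e2, hTprojzero, inner_zero_left, add_zero]
  constructor
  · rw [hiii]
    exact ⟨h32, h23⟩
  · exact hiii
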